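/- Let V be a finite type, d a metric on V, and μ, ν probability vectors on V. Then W(μ,ν) = sup { ∑_z f(z)·(μ(z) − ν(z)) : f : V → ℝ with |f(a) − f(b)| ≤ d(a,b) for all a, b ∈ V }; moreover both the infimum over couplings defining W(μ,ν) and this supremum over 1-Lipschitz functions are attained (Kantorovich–Rubinstein duality on a finite metric space). -/

import Mathlib

variable {V : Type*} [Fintype V]

/-- `d` is a metric on `V`. -/
def IsMetric (d : V → V → ℝ) : Prop :=
  (∀ a b, d a b = d b a) ∧ (∀ a b, d a b = 0 ↔ a = b) ∧
  (∀ a b c, d a c ≤ d a b + d b c)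

/-- `q` is a coupling of the probability vectors `μ` and `ν`. -/
def IsCoupling (μ ν : V → ℝ) (q : V → V → ℝ) : Prop :=
  (∀ a b, 0 ≤ q a b) ∧ (∀ a, ∑ b, q a b = μ a) ∧ (∀ b, ∑ a, q a b = ν b)

/-- The transport cost of a coupling. -/
noncomputable def cost (d : V → V → ℝ) (q : V → V → ℝ) : ℝ :=
  ∑ a, ∑ b, d a b * q a b

/-- The L¹-Wasserstein distance on a finite space. -/
noncomputable def Wass (d : V → V → ℝ) (μ ν : V → ℝ) : ℝ :=
  sInf {c | ∃ q : V → V → ℝ, IsCoupling μ ν q ∧ c = cost d q}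

set_option linter.unusedSectionVars false


section KR

variable {d : V → V → ℝ} {μ ν : V → ℝ}

lemma d_nonneg (hd : IsMetric d) (a b : V) : 0 ≤ d a b := by
  obtain ⟨hsym, hzero, htri⟩ := hd
  nlinarith [htri a b a, (hzero a a).mpr rfl, hsym a b]

lemma couplings_nonempty (hμ0 : ∀ z, 0 ≤ μ z) (hμ1 : ∑ z, μ z = 1)
    (hν0 : ∀ z, 0 ≤ ν z) (hν1 : ∑ z, ν z = 1) :
    IsCoupling μ ν (fun a b => μ a * ν b) := by
  refine ⟨fun a b => mul_nonneg (hμ0 a) (hν0 b), fun a => ?_, fun b => ?_⟩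
  · rw [← Finset.mul_sum, hν1, mul_one]
  · simp_rw [← Finset.sum_mul, hμ1, one_mul]

lemma cost_nonneg (hd : IsMetric d) {q : V → V → ℝ} (hq : ∀ a b, 0 ≤ q a b) :
    0 ≤ cost d q :=
  Finset.sum_nonneg fun a _ => Finset.sum_nonneg fun b _ =>
    mul_nonneg (d_nonneg hd a b) (hq a b)

lemma continuous_cost : Continuous (cost d : (V → V → ℝ) → ℝ) :=
  continuous_finset_sum _ fun a _ => continuous_finset_sum _ fun b _ =>
    continuous_const.mul ((continuous_apply b).comp (continuous_apply a))

lemma isClosed_couplings : IsClosed {q : V → V → ℝ | IsCoupling μ ν q} := by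
  have h : {q : V → V → ℝ | IsCoupling μ ν q} =
      (⋂ a, ⋂ b, {q : V → V → ℝ | 0 ≤ q a b}) ∩
      ((⋂ a, {q : V → V → ℝ | ∑ b, q a b = μ a}) ∩
       (⋂ b, {q : V → V → ℝ | ∑ a, q a b = ν b})) := by
    ext q
    simp only [Set.mem_setOf_eq, Set.mem_inter_iff, Set.mem_iInter, IsCoupling]
  rw [h]
  refine IsClosed.inter (isClosed_iInter fun a => isClosed_iInter fun b =>
      isClosed_le continuous_const ((continuous_apply b).comp (continuous_apply a))) ?_
  refine IsClosed.inter ?_ ?_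
  · exact isClosed_iInter fun a => isClosed_eq
      (continuous_finset_sum _ fun b _ => (continuous_apply b).comp (continuous_apply a))
      continuous_const
  · exact isClosed_iInter fun b => isClosed_eq
      (continuous_finset_sum _ fun a _ => (continuous_apply b).comp (continuous_apply a))
      continuous_const

lemma isCompact_couplings (hμ0 : ∀ z, 0 ≤ μ z) (hμ1 : ∑ z, μ z = 1) :
    IsCompact {q : V → V → ℝ | IsCoupling μ ν q} := by
  refine IsCompact.of_isClosed_subset
    (isCompact_univ_pi fun _ => isCompact_univ_pi fun _ => isCompact_Icc (a := (0:ℝ)) (b := 1))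
    isClosed_couplings ?_
  intro q hq
  obtain ⟨h0, hrow, _⟩ := hq
  intro a _ b _
  refine ⟨h0 a b, ?_⟩
  calc q a b ≤ ∑ b', q a b' :=
        Finset.single_le_sum (fun b' _ => h0 a b') (Finset.mem_univ b)
    _ = μ a := hrow a
    _ ≤ ∑ z, μ z := Finset.single_le_sum (fun z _ => hμ0 z) (Finset.mem_univ a)
    _ = 1 := hμ1

lemma exists_optimal_coupling (hd : IsMetric d) (hμ0 : ∀ z, 0 ≤ μ z) (hμ1 : ∑ z, μ z = 1)
    (hν0 : ∀ z, 0 ≤ ν z) (hν1 : ∑ z, ν z = 1) :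
    ∃ q : V → V → ℝ, IsCoupling μ ν q ∧ cost d q = Wass d μ ν ∧
      ∀ q', IsCoupling μ ν q' → cost d q ≤ cost d q' := by
  have hne : {q : V → V → ℝ | IsCoupling μ ν q}.Nonempty :=
    ⟨_, couplings_nonempty hμ0 hμ1 hν0 hν1⟩
  obtain ⟨q, hq, hmin⟩ := (isCompact_couplings hμ0 hμ1).exists_isMinOn hne
    continuous_cost.continuousOn
  have hmin' : ∀ q', IsCoupling μ ν q' → cost d q ≤ cost d q' := fun q' h => hmin h
  have hub : cost d q ∈ {c | ∃ q' : V → V → ℝ, IsCoupling μ ν q' ∧ c = cost d q'} :=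
    ⟨q, hq, rfl⟩
  have hbdd : BddBelow {c | ∃ q' : V → V → ℝ, IsCoupling μ ν q' ∧ c = cost d q'} :=
    ⟨0, by rintro c ⟨q', hq', rfl⟩; exact cost_nonneg hd hq'.1⟩
  refine ⟨q, hq, le_antisymm (le_csInf ⟨_, hub⟩ ?_) (csInf_le hbdd hub), hmin'⟩
  rintro c ⟨q', hq', rfl⟩
  exact hmin' q' hq'

lemma weak_duality {f : V → ℝ} (hf : ∀ a b, |f a - f b| ≤ d a b)
    {q : V → V → ℝ} (hq : IsCoupling μ ν q) :
    ∑ z, f z * (μ z - ν z) ≤ cost d q := by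
  obtain ⟨h0, hrow, hcol⟩ := hq
  have key : ∑ z, f z * (μ z - ν z) = ∑ a, ∑ b, (f a - f b) * q a b := by
    have h1 : ∑ z, f z * μ z = ∑ a, ∑ b, f a * q a b := by
      refine Finset.sum_congr rfl fun a _ => ?_
      rw [← hrow a, Finset.mul_sum]
    have h2 : ∑ z, f z * ν z = ∑ a, ∑ b, f b * q a b := by
      rw [Finset.sum_comm]
      refine Finset.sum_congr rfl fun b _ => ?_
      rw [← hcol b, Finset.mul_sum]
    simp_rw [mul_sub, Finset.sum_sub_distrib, h1, h2, sub_mul]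
    rw [← Finset.sum_sub_distrib]
    exact Finset.sum_congr rfl fun a _ => (by rw [Finset.sum_sub_distrib])
  rw [key, cost]
  refine Finset.sum_le_sum fun a _ => Finset.sum_le_sum fun b _ => ?_
  exact mul_le_mul_of_nonneg_right ((le_abs_self _).trans (hf a b)) (h0 a b)

end KR

section Cone

variable {d : V → V → ℝ} {μ ν : V → ℝ}

/-- The linear map sending `(q, s)` to (row sums, column sums, cost + s). -/
noncomputable def Phi (d : V → V → ℝ) (p : (V → V → ℝ) × ℝ) : (V → ℝ) × (V → ℝ) × ℝ :=
  (fun a => ∑ b, p.1 a b, fun b => ∑ a, p.1 a b, cost d p.1 + p.2)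

/-- The nonnegative orthant. -/
def Porth : Set ((V → V → ℝ) × ℝ) := {p | (∀ a b, 0 ≤ p.1 a b) ∧ 0 ≤ p.2}

lemma cost_add (q q' : V → V → ℝ) : cost d (q + q') = cost d q + cost d q' := by
  simp only [cost, Pi.add_apply, mul_add, Finset.sum_add_distrib]

lemma cost_smul (r : ℝ) (q : V → V → ℝ) : cost d (r • q) = r * cost d q := by
  simp only [cost, Pi.smul_apply, smul_eq_mul, Finset.mul_sum]
  ring_nf
  congr 1
  ext a
  congr 1
  ext b
  ring

lemma Phi_add (p p' : (V → V → ℝ) × ℝ) : Phi d (p + p') = Phi d p + Phi d p' := by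
  simp only [Phi, Prod.fst_add, Prod.snd_add, Pi.add_apply, cost_add, Prod.mk_add_mk]
  refine Prod.ext ?_ (Prod.ext ?_ ?_)
  · funext a; simp [Finset.sum_add_distrib]
  · funext b; simp [Finset.sum_add_distrib]
  · simp; ring

lemma Phi_smul (r : ℝ) (p : (V → V → ℝ) × ℝ) : Phi d (r • p) = r • Phi d p := by
  simp only [Phi, Prod.smul_fst, Prod.smul_snd, Pi.smul_apply, smul_eq_mul, cost_smul,
    Prod.smul_mk]
  refine Prod.ext ?_ (Prod.ext ?_ ?_)
  · funext a; simp [Finset.mul_sum]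
  · funext b; simp [Finset.mul_sum]
  · simp; ring

lemma continuous_Phi : Continuous (Phi d : (V → V → ℝ) × ℝ → (V → ℝ) × (V → ℝ) × ℝ) := by
  refine Continuous.prodMk ?_ (Continuous.prodMk ?_ ?_)
  · exact continuous_pi fun a => continuous_finset_sum _ fun b _ =>
      (continuous_apply b).comp ((continuous_apply a).comp continuous_fst)
  · exact continuous_pi fun b => continuous_finset_sum _ fun a _ =>
      (continuous_apply b).comp ((continuous_apply a).comp continuous_fst)
  · exact (continuous_cost.comp continuous_fst).add continuous_snd

lemma convex_K : Convex ℝ (Phi d '' Porth) := by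
  rintro x ⟨p, hp, rfl⟩ y ⟨p', hp', rfl⟩ s t hs ht _
  refine ⟨s • p + t • p', ⟨fun a b => ?_, ?_⟩, ?_⟩
  · exact add_nonneg (mul_nonneg hs (hp.1 a b)) (mul_nonneg ht (hp'.1 a b))
  · exact add_nonneg (mul_nonneg hs hp.2) (mul_nonneg ht hp'.2)
  · rw [Phi_add, Phi_smul, Phi_smul]

/-- The normalized slice of the orthant. -/
def Pslice : Set ((V → V → ℝ) × ℝ) :=
  {p | (∀ a b, 0 ≤ p.1 a b) ∧ 0 ≤ p.2 ∧ (∑ a, ∑ b, p.1 a b) + p.2 = 1}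

lemma isCompact_Pslice : IsCompact (Pslice (V := V)) := by
  have hsub : Pslice (V := V) ⊆
      (Set.pi Set.univ fun _ => Set.pi Set.univ fun _ => Set.Icc (0:ℝ) 1) ×ˢ
        Set.Icc (0:ℝ) 1 := by
    rintro ⟨q, s⟩ ⟨h0, hs, hsum⟩
    have hqs : ∀ a b, q a b ≤ ∑ a', ∑ b', q a' b' := by
      intro a b
      calc q a b ≤ ∑ b', q a b' :=
            Finset.single_le_sum (fun b' _ => h0 a b') (Finset.mem_univ b)
        _ ≤ ∑ a', ∑ b', q a' b' :=
            Finset.single_le_sum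
              (fun a' _ => Finset.sum_nonneg fun b' _ => h0 a' b') (Finset.mem_univ a)
    have hmass : 0 ≤ ∑ a', ∑ b', q a' b' :=
      Finset.sum_nonneg fun a' _ => Finset.sum_nonneg fun b' _ => h0 a' b'
    constructor
    · intro a _ b _
      exact ⟨h0 a b, by have := hqs a b; simp only at hsum ⊢; linarith⟩
    · exact ⟨hs, by simp only at hsum ⊢; linarith⟩
  have hclosed : IsClosed (Pslice (V := V)) := by
    have h : Pslice (V := V) =
        (⋂ a, ⋂ b, {p : (V → V → ℝ) × ℝ | 0 ≤ p.1 a b}) ∩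
        ({p : (V → V → ℝ) × ℝ | 0 ≤ p.2} ∩
         {p : (V → V → ℝ) × ℝ | (∑ a, ∑ b, p.1 a b) + p.2 = 1}) := by
      ext p
      simp only [Pslice, Set.mem_setOf_eq, Set.mem_inter_iff, Set.mem_iInter]
    rw [h]
    have hc : ∀ a b : V, Continuous fun p : (V → V → ℝ) × ℝ => p.1 a b := fun a b =>
      (continuous_apply b).comp ((continuous_apply a).comp continuous_fst)
    refine IsClosed.inter (isClosed_iInter fun a => isClosed_iInter fun b =>
        isClosed_le continuous_const (hc a b)) (IsClosed.inter ?_ ?_)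
    · exact isClosed_le continuous_const continuous_snd
    · exact isClosed_eq
        ((continuous_finset_sum _ fun a _ => continuous_finset_sum _ fun b _ => hc a b).add
          continuous_snd) continuous_const
  exact IsCompact.of_isClosed_subset
    ((isCompact_univ_pi fun _ => isCompact_univ_pi fun _ => isCompact_Icc).prod isCompact_Icc)
    hclosed hsub

lemma mem_K_rep (hd : IsMetric d) {x : (V → ℝ) × (V → ℝ) × ℝ} (hx : x ∈ Phi d '' Porth) :
    ∃ r : ℝ, 0 ≤ r ∧ ∃ p ∈ Pslice (V := V), x = r • Phi d p := by
  obtain ⟨p₀, ⟨h0, hs⟩, rfl⟩ := hx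
  set m : ℝ := (∑ a, ∑ b, p₀.1 a b) + p₀.2 with hm
  have hmass : 0 ≤ ∑ a, ∑ b, p₀.1 a b :=
    Finset.sum_nonneg fun a _ => Finset.sum_nonneg fun b _ => h0 a b
  have hm0 : 0 ≤ m := by positivity
  rcases eq_or_lt_of_le hm0 with hm1 | hm1
  · -- m = 0 : everything is zero
    have hq0 : p₀.1 = 0 := by
      have hsum0 : ∑ a, ∑ b, p₀.1 a b = 0 := by linarith [hs]
      funext a b
      have ha := (Finset.sum_eq_zero_iff_of_nonneg
        (fun a _ => Finset.sum_nonneg fun b _ => h0 a b)).mp hsum0 a (Finset.mem_univ a)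
      exact (Finset.sum_eq_zero_iff_of_nonneg fun b _ => h0 a b).mp ha b (Finset.mem_univ b)
    have hs0 : p₀.2 = 0 := by
      have hsum0 : ∑ a, ∑ b, p₀.1 a b = 0 := by
        simp [hq0]
      linarith [hm1.symm]
    refine ⟨0, le_refl 0, ((0 : V → V → ℝ), 1), ⟨fun a b => le_refl 0, zero_le_one, by simp⟩, ?_⟩
    have : Phi d p₀ = (0 : (V → ℝ) × (V → ℝ) × ℝ) := by
      simp only [Phi, hq0, hs0, cost, Pi.zero_apply, mul_zero, Finset.sum_const_zero,
        add_zero]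
      rfl
    rw [this, zero_smul]
  · refine ⟨m, le_of_lt hm1, m⁻¹ • p₀, ⟨?_, ?_, ?_⟩, ?_⟩
    · intro a b
      exact mul_nonneg (inv_nonneg.mpr hm0) (h0 a b)
    · exact mul_nonneg (inv_nonneg.mpr hm0) hs
    · simp only [Prod.smul_fst, Prod.smul_snd, Pi.smul_apply, smul_eq_mul, ← Finset.mul_sum]
      rw [← mul_add, ← hm, inv_mul_cancel₀ (ne_of_gt hm1)]
    · rw [← Phi_smul, smul_smul, mul_inv_cancel₀ (ne_of_gt hm1), one_smul]

lemma isClosed_K (hd : IsMetric d) : IsClosed (Phi d '' (Porth (V := V))) := by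
  refine IsSeqClosed.isClosed ?_
  intro x x₀ hmem hlim
  choose r hr p hp hrep using fun n => mem_K_rep hd (hmem n)
  -- the auxiliary continuous functional bounding r n
  set g : (V → ℝ) × (V → ℝ) × ℝ → ℝ := fun y => (∑ a, y.1 a) + y.2.2 with hg
  have hgcont : Continuous g :=
    (continuous_finset_sum _ fun a _ => (continuous_apply a).comp continuous_fst).add
      (continuous_snd.comp continuous_snd)
  have hgx : ∀ n, r n ≤ g (x n) := by
    intro n
    obtain ⟨h0, hs, hsum⟩ := hp n
    have hcost : 0 ≤ cost d (p n).1 := cost_nonneg hd h0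
    have : g (x n) = r n * ((∑ a, ∑ b, (p n).1 a b) + (cost d (p n).1 + (p n).2)) := by
      rw [hrep n]
      simp only [hg, Phi, Prod.smul_fst, Prod.smul_snd, Pi.smul_apply, smul_eq_mul,
        ← Finset.mul_sum]
      ring
    rw [this]
    nlinarith [hr n, hsum]
  have hglim : Filter.Tendsto (fun n => g (x n)) Filter.atTop (nhds (g x₀)) :=
    (hgcont.continuousAt).tendsto.comp hlim
  obtain ⟨M, hM⟩ := hglim.bddAbove_range
  have hrM : ∀ n, r n ∈ Set.Icc (0:ℝ) M := by
    intro n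
    exact ⟨hr n, (hgx n).trans (hM (Set.mem_range_self n))⟩
  -- compactness of the pair sequence
  obtain ⟨⟨r₀, p₀⟩, hmem₀, σ, hσ, hconv⟩ :=
    ((isCompact_Icc (a := (0:ℝ)) (b := M)).prod isCompact_Pslice).tendsto_subseq
      (x := fun n => ((r n, p n) : ℝ × ((V → V → ℝ) × ℝ))) (fun n => ⟨hrM n, hp n⟩)
  have hrconv : Filter.Tendsto (fun n => r (σ n)) Filter.atTop (nhds r₀) :=
    (continuous_fst.continuousAt.tendsto.comp hconv)
  have hpconv : Filter.Tendsto (fun n => p (σ n)) Filter.atTop (nhds p₀) :=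
    (continuous_snd.continuousAt.tendsto.comp hconv)
  have hxconv : Filter.Tendsto (fun n => x (σ n)) Filter.atTop (nhds (r₀ • Phi d p₀)) := by
    have : Filter.Tendsto (fun n => r (σ n) • Phi d (p (σ n))) Filter.atTop
        (nhds (r₀ • Phi d p₀)) :=
      hrconv.smul ((continuous_Phi.continuousAt.tendsto).comp hpconv)
    simpa only [← hrep] using this
  have hxlim : Filter.Tendsto (fun n => x (σ n)) Filter.atTop (nhds x₀) :=
    hlim.comp (StrictMono.tendsto_atTop hσ)
  have hx₀ : x₀ = r₀ • Phi d p₀ := tendsto_nhds_unique hxlim hxconv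
  have hp₀P : (r₀ • p₀) ∈ Porth (V := V) := by
    obtain ⟨h0, hs, _⟩ := hmem₀.2
    exact ⟨fun a b => mul_nonneg hmem₀.1.1 (h0 a b), mul_nonneg hmem₀.1.1 hs⟩
  exact ⟨r₀ • p₀, hp₀P, by rw [Phi_smul, hx₀]⟩

end Cone

section Sep

variable [DecidableEq V] {d : V → V → ℝ} {μ ν : V → ℝ}

lemma clm_decomp (F : ((V → ℝ) × (V → ℝ) × ℝ) →L[ℝ] ℝ) (x : (V → ℝ) × (V → ℝ) × ℝ) :
    F x = (∑ a, x.1 a * F (Pi.single a 1, 0, 0)) +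
      (∑ b, x.2.1 b * F (0, Pi.single b 1, 0)) + x.2.2 * F (0, 0, 1) := by
  obtain ⟨x1, x2, x3⟩ := x
  have h1 : ((x1, 0, 0) : (V → ℝ) × (V → ℝ) × ℝ) =
      ∑ a, x1 a • ((Pi.single a 1 : V → ℝ), (0 : V → ℝ), (0 : ℝ)) := by
    rw [Prod.ext_iff]
    constructor
    · rw [Prod.fst_sum]
      funext c
      simp [Finset.sum_apply, Pi.single_apply, mul_ite]
    · rw [Prod.snd_sum]
      simp
  have h2 : ((0, x2, 0) : (V → ℝ) × (V → ℝ) × ℝ) =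
      ∑ b, x2 b • ((0 : V → ℝ), (Pi.single b 1 : V → ℝ), (0 : ℝ)) := by
    rw [Prod.ext_iff]
    constructor
    · rw [Prod.fst_sum]
      simp
    · rw [Prod.snd_sum]
      rw [Prod.ext_iff]
      constructor
      · rw [Prod.fst_sum]
        funext c
        simp [Finset.sum_apply, Pi.single_apply, mul_ite]
      · rw [Prod.snd_sum]
        simp
  have hx : ((x1, x2, x3) : (V → ℝ) × (V → ℝ) × ℝ) =
      (x1, 0, 0) + (0, x2, 0) + x3 • ((0 : V → ℝ), (0 : V → ℝ), (1 : ℝ)) := by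
    simp [Prod.ext_iff]
  have e1 : F (x1, 0, 0) = ∑ a, x1 a * F (Pi.single a 1, 0, 0) := by
    rw [h1, map_sum]
    exact Finset.sum_congr rfl fun a _ => by rw [map_smul, smul_eq_mul]
  have e2 : F (0, x2, 0) = ∑ b, x2 b * F (0, Pi.single b 1, 0) := by
    rw [h2, map_sum]
    exact Finset.sum_congr rfl fun b _ => by rw [map_smul, smul_eq_mul]
  calc F (x1, x2, x3) = F ((x1, 0, 0) + (0, x2, 0) + x3 • ((0:V → ℝ), (0:V → ℝ), (1:ℝ))) := by
        rw [← hx]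
    _ = _ := by rw [map_add, map_add, map_smul, e1, e2, smul_eq_mul]

lemma generator_mem (hd : IsMetric d) (a b : V) :
    ((Pi.single a 1 : V → ℝ), (Pi.single b 1 : V → ℝ), d a b) ∈ Phi d '' Porth := by
  refine ⟨(fun x y => (Pi.single a 1 : V → ℝ) x * (Pi.single b 1 : V → ℝ) y, 0),
    ⟨fun x y => ?_, le_refl 0⟩, ?_⟩
  · exact mul_nonneg (by by_cases h : x = a <;> simp [Pi.single_apply, h])
      (by by_cases h : y = b <;> simp [Pi.single_apply, h])
  · simp only [Phi, Prod.mk.injEq]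
    refine ⟨?_, ?_, ?_⟩
    · funext x
      rw [← Finset.mul_sum]
      simp [Finset.sum_pi_single']
    · funext y
      rw [← Finset.sum_mul]
      simp [Finset.sum_pi_single']
    · simp only [cost, add_zero]
      rw [Finset.sum_eq_single a]
      · rw [Finset.sum_eq_single b]
        · simp [Pi.single_apply]
        · intro y _ hy; simp [Pi.single_apply, hy]
        · intro h; exact absurd (Finset.mem_univ b) h
      · intro x _ hx
        refine Finset.sum_eq_zero fun y _ => ?_
        simp [Pi.single_apply, hx]
      · intro h; exact absurd (Finset.mem_univ a) h

lemma unit_mem (hd : IsMetric d) :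
    ((0 : V → ℝ), (0 : V → ℝ), (1:ℝ)) ∈ Phi d '' (Porth (V := V)) := by
  refine ⟨(0, 1), ⟨fun a b => le_refl 0, zero_le_one⟩, ?_⟩
  simp only [Phi, cost, Pi.zero_apply, mul_zero, Finset.sum_const_zero, zero_add]
  rfl

lemma zero_mem (hd : IsMetric d) :
    (0 : (V → ℝ) × (V → ℝ) × ℝ) ∈ Phi d '' (Porth (V := V)) := by
  refine ⟨(0, 0), ⟨fun a b => le_refl 0, le_refl 0⟩, ?_⟩
  simp only [Phi, cost, Pi.zero_apply, mul_zero, Finset.sum_const_zero, add_zero]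
  rfl

/-- For every ε > 0 there is a feasible dual pair with value above `W - ε`. -/
lemma exists_dual_pair (hd : IsMetric d) (hμ0 : ∀ z, 0 ≤ μ z) (hμ1 : ∑ z, μ z = 1)
    (hν0 : ∀ z, 0 ≤ ν z) (hν1 : ∑ z, ν z = 1) {ε : ℝ} (hε : 0 < ε) :
    ∃ φ ψ : V → ℝ, (∀ a b, φ a + ψ b ≤ d a b) ∧
      Wass d μ ν - ε < (∑ a, μ a * φ a) + (∑ b, ν b * ψ b) := by
  obtain ⟨qopt, hqopt, hcost, hminopt⟩ := exists_optimal_coupling hd hμ0 hμ1 hν0 hν1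
  set W := Wass d μ ν with hW
  -- the point to separate
  set x₀ : (V → ℝ) × (V → ℝ) × ℝ := (μ, ν, W - ε) with hx₀
  have hx₀K : x₀ ∉ Phi d '' Porth := by
    rintro ⟨p, ⟨h0, hs⟩, hPhi⟩
    have h1 : (fun a => ∑ b, p.1 a b) = μ := congrArg Prod.fst hPhi
    have h2 : (fun b => ∑ a, p.1 a b) = ν := congrArg Prod.fst (congrArg Prod.snd hPhi)
    have h3 : cost d p.1 + p.2 = W - ε := congrArg (fun y => y.2.2) hPhi
    have hcoup : IsCoupling μ ν p.1 :=
      ⟨h0, fun a => congrFun h1 a, fun b => congrFun h2 b⟩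
    have := hminopt p.1 hcoup
    rw [hcost] at this
    linarith
  obtain ⟨F, u, hFK, hFx⟩ :=
    geometric_hahn_banach_closed_point (convex_K) (isClosed_K hd) hx₀K
  have hu0 : 0 < u := by
    have := hFK 0 (zero_mem hd)
    rwa [map_zero] at this
  -- F is nonpositive on the cone
  have hFnonpos : ∀ k ∈ Phi d '' (Porth (V := V)), F k ≤ 0 := by
    intro k hk
    by_contra hpos
    push_neg at hpos
    obtain ⟨p, hp, rfl⟩ := hk
    have hscale : ((u + 1) / F (Phi d p)) • Phi d p ∈ Phi d '' (Porth (V := V)) := by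
      have hc : 0 ≤ (u + 1) / F (Phi d p) := by positivity
      refine ⟨((u + 1) / F (Phi d p)) • p, ⟨fun a b => ?_, ?_⟩, Phi_smul _ _⟩
      · exact mul_nonneg hc (hp.1 a b)
      · exact mul_nonneg hc hp.2
    have := hFK _ hscale
    rw [map_smul, smul_eq_mul, div_mul_cancel₀ _ (ne_of_gt hpos)] at this
    linarith
  set φ : V → ℝ := fun a => F (Pi.single a 1, 0, 0) with hφ
  set ψ : V → ℝ := fun b => F (0, Pi.single b 1, 0) with hψ
  set t : ℝ := F (0, 0, 1) with ht
  have hgen : ∀ a b, φ a + ψ b + d a b * t ≤ 0 := by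
    intro a b
    have hmem := hFnonpos _ (generator_mem hd a b)
    rw [clm_decomp] at hmem
    have e1 : ∑ c, ((Pi.single a 1 : V → ℝ), (Pi.single b 1 : V → ℝ), d a b).1 c *
        F (Pi.single c 1, 0, 0) = φ a := by
      rw [Finset.sum_eq_single a (fun c _ hc => by simp [Pi.single_apply, hc])
        (fun h => absurd (Finset.mem_univ a) h)]
      simp [Pi.single_apply, hφ]
    have e2 : ∑ c, ((Pi.single a 1 : V → ℝ), (Pi.single b 1 : V → ℝ), d a b).2.1 c *
        F (0, Pi.single c 1, 0) = ψ b := by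
      rw [Finset.sum_eq_single b (fun c _ hc => by simp [Pi.single_apply, hc])
        (fun h => absurd (Finset.mem_univ b) h)]
      simp [Pi.single_apply, hψ]
    rw [e1, e2] at hmem
    simpa using hmem
  have htle : t ≤ 0 := by
    have := hFnonpos _ (unit_mem hd)
    rw [clm_decomp] at this
    simpa using this
  have hxval : (∑ a, μ a * φ a) + (∑ b, ν b * ψ b) + (W - ε) * t > 0 := by
    have := hFx
    rw [clm_decomp] at this
    simp only [hx₀] at this
    linarith [hu0, this]
  -- key inequality for any coupling q
  have hkey : ∀ q : V → V → ℝ, IsCoupling μ ν q →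
      (∑ a, μ a * φ a) + (∑ b, ν b * ψ b) + t * cost d q ≤ 0 := by
    intro q ⟨h0, hrow, hcol⟩
    have h1 : ∑ a, μ a * φ a = ∑ a, ∑ b, q a b * φ a := by
      refine Finset.sum_congr rfl fun a _ => ?_
      rw [← hrow a, Finset.sum_mul]
    have h2 : ∑ b, ν b * ψ b = ∑ a, ∑ b, q a b * ψ b := by
      rw [Finset.sum_comm]
      refine Finset.sum_congr rfl fun b _ => ?_
      rw [← hcol b, Finset.sum_mul]
    have h3 : t * cost d q = ∑ a, ∑ b, q a b * (d a b * t) := by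
      rw [cost, Finset.mul_sum]
      refine Finset.sum_congr rfl fun a _ => ?_
      rw [Finset.mul_sum]
      exact Finset.sum_congr rfl fun b _ => by ring
    rw [h1, h2, h3, ← Finset.sum_add_distrib, ← Finset.sum_add_distrib]
    refine Finset.sum_nonpos fun a _ => ?_
    rw [← Finset.sum_add_distrib, ← Finset.sum_add_distrib]
    refine Finset.sum_nonpos fun b _ => ?_
    have : q a b * φ a + q a b * ψ b + q a b * (d a b * t) =
        q a b * (φ a + ψ b + d a b * t) := by ring
    rw [this]
    exact mul_nonpos_of_nonneg_of_nonpos (h0 a b) (hgen a b)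
  have htneg : t < 0 := by
    rcases lt_or_eq_of_le htle with h | h
    · exact h
    · exfalso
      have hthis := hkey qopt hqopt
      rw [h, zero_mul, add_zero] at hthis
      rw [h, mul_zero, add_zero] at hxval
      linarith
  refine ⟨fun a => φ a / (-t), fun b => ψ b / (-t), fun a b => ?_, ?_⟩
  · rw [← add_div, div_le_iff₀ (by linarith)]
    nlinarith [hgen a b]
  · have hsum : (∑ a, μ a * (φ a / (-t))) + (∑ b, ν b * (ψ b / (-t))) =
        ((∑ a, μ a * φ a) + (∑ b, ν b * ψ b)) / (-t) := by
      rw [add_div]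
      congr 1 <;> · rw [Finset.sum_div]; exact Finset.sum_congr rfl fun z _ => by ring
    rw [hsum, lt_div_iff₀ (by linarith)]
    nlinarith [hxval]

end Sep

section Dual

variable [DecidableEq V] {d : V → V → ℝ} {μ ν : V → ℝ}

/-- From a feasible dual pair, construct a 1-Lipschitz function with at least the same value. -/
lemma exists_lipschitz_of_dual_pair [Nonempty V] (hd : IsMetric d)
    (hμ0 : ∀ z, 0 ≤ μ z) (hν0 : ∀ z, 0 ≤ ν z)
    {φ ψ : V → ℝ} (hfeas : ∀ a b, φ a + ψ b ≤ d a b) :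
    ∃ f : V → ℝ, (∀ a b, |f a - f b| ≤ d a b) ∧
      (∑ a, μ a * φ a) + (∑ b, ν b * ψ b) ≤ ∑ z, f z * (μ z - ν z) := by
  obtain ⟨hsym, hzero, htri⟩ := hd
  set f : V → ℝ := fun a => Finset.univ.inf' Finset.univ_nonempty (fun b => d a b - ψ b) with hf
  have hle : ∀ a b, f a ≤ d a b - ψ b := fun a b =>
    Finset.inf'_le _ (Finset.mem_univ b)
  have hφle : ∀ a, φ a ≤ f a := fun a =>
    Finset.le_inf' _ _ fun b _ => by linarith [hfeas a b]
  have hψle : ∀ b, f b ≤ -ψ b := fun b => by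
    have := hle b b
    rw [(hzero b b).mpr rfl] at this
    linarith
  have hlip1 : ∀ a a', f a - f a' ≤ d a a' := by
    intro a a'
    obtain ⟨b', _, hb'⟩ := Finset.exists_mem_eq_inf' (Finset.univ_nonempty) (fun b => d a' b - ψ b)
    have h1 : f a ≤ d a b' - ψ b' := hle a b'
    have h2 : f a' = d a' b' - ψ b' := hb'
    have h3 : d a b' ≤ d a a' + d a' b' := htri a a' b'
    linarith
  refine ⟨f, fun a b => ?_, ?_⟩
  · rw [abs_sub_le_iff]
    exact ⟨hlip1 a b, by rw [hsym a b] at *; exact hlip1 b a⟩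
  · have : ∑ z, f z * (μ z - ν z) = (∑ z, f z * μ z) + (∑ z, (- f z) * ν z) := by
      simp_rw [mul_sub, Finset.sum_sub_distrib, neg_mul, Finset.sum_neg_distrib]
      ring
    rw [this]
    refine add_le_add (Finset.sum_le_sum fun z _ => ?_) (Finset.sum_le_sum fun z _ => ?_)
    · rw [mul_comm (μ z)]
      exact mul_le_mul_of_nonneg_right (hφle z) (hμ0 z)
    · rw [mul_comm (ν z)]
      exact mul_le_mul_of_nonneg_right (by linarith [hψle z]) (hν0 z)

/-- Attainment of the dual supremum at value `Wass d μ ν`. -/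
lemma exists_optimal_lipschitz [Nonempty V] (hd : IsMetric d)
    (hμ0 : ∀ z, 0 ≤ μ z) (hμ1 : ∑ z, μ z = 1)
    (hν0 : ∀ z, 0 ≤ ν z) (hν1 : ∑ z, ν z = 1) :
    ∃ f : V → ℝ, (∀ a b, |f a - f b| ≤ d a b) ∧
      ∑ z, f z * (μ z - ν z) = Wass d μ ν := by
  obtain ⟨qopt, hqopt, hcost, _⟩ := exists_optimal_coupling hd hμ0 hμ1 hν0 hν1
  set x0 : V := Classical.arbitrary V with hx0
  set L : Set (V → ℝ) :=
    {f | (∀ a b, |f a - f b| ≤ d a b) ∧ f x0 = 0} with hL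
  have hLclosed : IsClosed L := by
    have h : L = (⋂ a, ⋂ b, {f : V → ℝ | |f a - f b| ≤ d a b}) ∩ {f : V → ℝ | f x0 = 0} := by
      ext f
      simp only [hL, Set.mem_setOf_eq, Set.mem_inter_iff, Set.mem_iInter]
    rw [h]
    refine IsClosed.inter (isClosed_iInter fun a => isClosed_iInter fun b =>
        isClosed_le (Continuous.abs ((continuous_apply a).sub (continuous_apply b)))
          continuous_const) (isClosed_eq (continuous_apply x0) continuous_const)
  have hLcompact : IsCompact L := by
    refine IsCompact.of_isClosed_subset
      (isCompact_univ_pi fun a => isCompact_Icc (a := -(d a x0)) (b := d a x0)) hLclosed ?_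
    rintro f ⟨hlip, hf0⟩ a _
    have := hlip a x0
    rw [hf0, sub_zero] at this
    exact abs_le.mp this
  have hLne : L.Nonempty := ⟨0, fun a b => by
    simp only [Pi.zero_apply, sub_zero, abs_zero]; exact d_nonneg ⟨fun a b => by
      exact hd.1 a b, hd.2.1, hd.2.2⟩ a b, rfl⟩
  have hvalcont : Continuous fun f : V → ℝ => ∑ z, f z * (μ z - ν z) :=
    continuous_finset_sum _ fun z _ => (continuous_apply z).mul continuous_const
  obtain ⟨fopt, hfoptL, hmax⟩ := hLcompact.exists_isMaxOn hLne hvalcont.continuousOn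
  have hmax' : ∀ g ∈ L, ∑ z, g z * (μ z - ν z) ≤ ∑ z, fopt z * (μ z - ν z) :=
    fun g hg => hmax hg
  refine ⟨fopt, hfoptL.1, le_antisymm (weak_duality hfoptL.1 hqopt |>.trans_eq hcost) ?_⟩
  -- Wass ≤ value of fopt
  refine le_of_forall_sub_le fun ε hε => ?_
  obtain ⟨φ, ψ, hfeas, hval⟩ := exists_dual_pair hd hμ0 hμ1 hν0 hν1 hε
  obtain ⟨f, hflip, hfval⟩ := exists_lipschitz_of_dual_pair hd hμ0 hν0 hfeas
  -- normalize f
  set g : V → ℝ := fun a => f a - f x0 with hg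
  have hgL : g ∈ L := by
    refine ⟨fun a b => ?_, by simp [hg]⟩
    simpa [hg, sub_sub_sub_cancel_right] using hflip a b
  have hμν0 : ∑ z, (μ z - ν z) = 0 := by
    rw [Finset.sum_sub_distrib, hμ1, hν1, sub_self]
  have hgval : ∑ z, g z * (μ z - ν z) = ∑ z, f z * (μ z - ν z) := by
    simp only [hg, sub_mul, Finset.sum_sub_distrib, ← Finset.mul_sum, hμν0, mul_zero, sub_zero]
  have := hmax' g hgL
  rw [hgval] at this
  linarith

end Dual

theorem kantorovich_rubinstein_duality_finite
    (d : V → V → ℝ) (hd : IsMetric d) (μ ν : V → ℝ)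
    (hμ0 : ∀ z, 0 ≤ μ z) (hμ1 : ∑ z, μ z = 1)
    (hν0 : ∀ z, 0 ≤ ν z) (hν1 : ∑ z, ν z = 1) :
    Wass d μ ν =
      sSup {s | ∃ f : V → ℝ, (∀ a b, |f a - f b| ≤ d a b) ∧
        s = ∑ z, f z * (μ z - ν z)} ∧
    (∃ q : V → V → ℝ, IsCoupling μ ν q ∧ cost d q = Wass d μ ν) ∧
    (∃ f : V → ℝ, (∀ a b, |f a - f b| ≤ d a b) ∧
      ∑ z, f z * (μ z - ν z) = Wass d μ ν) := by
  haveI : DecidableEq V := Classical.decEq V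
  haveI : Nonempty V := by
    rcases isEmpty_or_nonempty V with h | h
    · exfalso
      rw [Finset.univ_eq_empty, Finset.sum_empty] at hμ1
      exact one_ne_zero hμ1.symm
    · exact h
  obtain ⟨qopt, hqopt, hcost, _⟩ := exists_optimal_coupling hd hμ0 hμ1 hν0 hν1
  obtain ⟨fopt, hflip, hfval⟩ := exists_optimal_lipschitz hd hμ0 hμ1 hν0 hν1
  refine ⟨?_, ⟨qopt, hqopt, hcost⟩, ⟨fopt, hflip, hfval⟩⟩
  have hub : ∀ s ∈ {s | ∃ f : V → ℝ, (∀ a b, |f a - f b| ≤ d a b) ∧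
      s = ∑ z, f z * (μ z - ν z)}, s ≤ Wass d μ ν := by
    rintro s ⟨f, hf, rfl⟩
    exact (weak_duality hf hqopt).trans_eq hcost
  have hmem : Wass d μ ν ∈ {s | ∃ f : V → ℝ, (∀ a b, |f a - f b| ≤ d a b) ∧
      s = ∑ z, f z * (μ z - ν z)} := ⟨fopt, hflip, hfval.symm⟩
  exact le_antisymm (le_csSup ⟨Wass d μ ν, hub⟩ hmem) (csSup_le ⟨_, hmem⟩ hub)
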